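/- Suppose that the NBDSA principle holds. Then for every t ∈ [0,T], D(t,T)·1_{{τ ≤ t}} = 0 P-a.s. -/

import Mathlib

open MeasureTheory

/-- The enlarged filtration `G_t := σ(F_t ∪ I_t)`, where
`I_t := σ({τ ≤ u} : u ∈ [0,t])`. -/
def enlarge {Ω : Type*} (F : ℝ → MeasurableSpace Ω) (τ : Ω → ℝ) (t : ℝ) :
    MeasurableSpace Ω :=
  F t ⊔ MeasurableSpace.generateFrom {A | ∃ u : ℝ, 0 ≤ u ∧ u ≤ t ∧ A = {ω | τ ω ≤ u}}

/-- The value process `V_ψ(t) = ψ^B(t)B(t,T) + ψ^D(t)D(t,T)`, with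
`B(t,T) = e^{-r(T-t)}`. -/
noncomputable def BDvalue {Ω : Type*} (r T : ℝ) (D : ℝ → Ω → ℝ) (ψB ψD : ℝ → Ω → ℝ)
    (t : ℝ) (ω : Ω) : ℝ :=
  ψB t ω * Real.exp (-(r * (T - t))) + ψD t ω * D t ω

/-- `ψ = (ψB, ψD)` is a `BD`-simple self-financing strategy. -/
def IsBDSimpleSelfFinancing {Ω : Type*} [MeasurableSpace Ω] (P : Measure Ω)
    (F : ℝ → MeasurableSpace Ω) (τ : Ω → ℝ) (D : ℝ → Ω → ℝ) (r T : ℝ)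
    (ψB ψD : ℝ → Ω → ℝ) : Prop :=
  (∀ t ∈ Set.Icc (0 : ℝ) T,
    Measurable[enlarge F τ t] (ψB t) ∧ Measurable[enlarge F τ t] (ψD t)) ∧
  ∃ (N : ℕ) (s : ℕ → ℝ) (x y : ℕ → Ω → ℝ),
    0 < N ∧ s 0 = 0 ∧ s N = T ∧
    (∀ n, n < N → s n < s (n + 1)) ∧
    (∀ n, 1 ≤ n → n ≤ N → Measurable[enlarge F τ (s (n - 1))] (x n) ∧
      Measurable[enlarge F τ (s (n - 1))] (y n)) ∧
    (∀ n, 1 ≤ n → n ≤ N → ∀ t ∈ Set.Ioc (s (n - 1)) (s n), ψB t = x n ∧ ψD t = y n) ∧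
    (∀ n, n < N → ∀ᵐ ω ∂P,
      Filter.Tendsto (fun t => BDvalue r T D ψB ψD t ω)
        (nhdsWithin (s n) (Set.Ioi (s n))) (nhds (BDvalue r T D ψB ψD (s n) ω)))

/-- The no-`BD`-simple-arbitrage (NBDSA) principle. -/
def NBDSA {Ω : Type*} [MeasurableSpace Ω] (P : Measure Ω)
    (F : ℝ → MeasurableSpace Ω) (τ : Ω → ℝ) (D : ℝ → Ω → ℝ) (r T : ℝ) : Prop :=
  ¬ ∃ ψB ψD : ℝ → Ω → ℝ, IsBDSimpleSelfFinancing P F τ D r T ψB ψD ∧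
    (∀ᵐ ω ∂P, BDvalue r T D ψB ψD 0 ω = 0) ∧
    (∀ᵐ ω ∂P, 0 ≤ BDvalue r T D ψB ψD T ω) ∧
    0 < P {ω | 0 < BDvalue r T D ψB ψD T ω}

lemma enlarge_mono' {Ω : Type*} (F : ℝ → MeasurableSpace Ω) (τ : Ω → ℝ) {s t : ℝ}
    (hF : F s ≤ F t) (hst : s ≤ t) : enlarge F τ s ≤ enlarge F τ t := by
  refine sup_le_sup hF (MeasurableSpace.generateFrom_mono ?_)
  rintro A ⟨u, hu0, hus, rfl⟩
  exact ⟨u, hu0, hus.trans hst, rfl⟩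

/-- Suppose that the NBDSA principle holds.  Then for every `t ∈ [0,T]`,
`D(t,T)·1_{{τ ≤ t}} = 0` `P`-a.s. -/
theorem stmt16 {Ω : Type*} [mΩ : MeasurableSpace Ω] (P : Measure Ω)
    [IsProbabilityMeasure P] (T r : ℝ) (hT : 0 < T) (hr : 0 ≤ r)
    (F : ℝ → MeasurableSpace Ω)
    (hF_mono : ∀ s t : ℝ, 0 ≤ s → s ≤ t → t ≤ T → F s ≤ F t)
    (hF_le : ∀ t ∈ Set.Icc (0 : ℝ) T, F t ≤ mΩ)
    (τ : Ω → ℝ) (hτ_pos : ∀ ω, 0 < τ ω) (hτ_meas : Measurable τ)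
    (D : ℝ → Ω → ℝ)
    (hD_adapted : ∀ t ∈ Set.Icc (0 : ℝ) T, Measurable[enlarge F τ t] (D t))
    (hD_T : ∀ ω, D T ω = Set.indicator {ω' | T < τ ω'} (fun _ => (1 : ℝ)) ω)
    (hD_cont : ∀ ω, ContinuousOn (fun t => D t ω) (Set.Icc 0 T ∩ Set.Iio (τ ω)))
    (hD_rc : ∀ ω, ∀ t ∈ Set.Icc (0 : ℝ) T, τ ω ≤ t →
      ContinuousWithinAt (fun t => D t ω) (Set.Ici t) t)
    (hNBDSA : NBDSA P F τ D r T) :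
    ∀ t ∈ Set.Icc (0 : ℝ) T, ∀ᵐ ω ∂P,
      D t ω * Set.indicator {ω' | τ ω' ≤ t} (fun _ => (1 : ℝ)) ω = 0 := by
  intro t₀ ht₀
  obtain ⟨ht₀0, ht₀T⟩ := ht₀
  rcases eq_or_lt_of_le ht₀T with hTT | ht₀T'
  · subst hTT
    refine Filter.Eventually.of_forall fun ω => ?_
    by_cases h : τ ω ≤ t₀
    · simp [hD_T, Set.indicator_apply, h, not_lt.mpr h]
    · simp [Set.indicator_apply, h]
  rcases eq_or_lt_of_le ht₀0 with h0 | ht₀0'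
  · subst h0
    refine Filter.Eventually.of_forall fun ω => ?_
    simp [Set.indicator_apply, not_le.mpr (hτ_pos ω)]
  by_contra hcon
  rw [MeasureTheory.ae_iff] at hcon
  set A : Set Ω := {ω | τ ω ≤ t₀} with hAdef
  set X : Ω → ℝ := fun ω => A.indicator (fun _ => (1:ℝ)) ω * (D t₀ ω * D t₀ ω)
      * Real.exp (r * (T - t₀)) with hXdef
  set Y : Ω → ℝ := fun ω => -(A.indicator (fun _ => (1:ℝ)) ω * D t₀ ω) with hYdef
  set ψB : ℝ → Ω → ℝ := fun t ω => if t₀ < t then X ω else 0 with hψB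
  set ψD : ℝ → Ω → ℝ := fun t ω => if t₀ < t then Y ω else 0 with hψD
  have hVal : ∀ u (ω : Ω), BDvalue r T D ψB ψD u ω =
      if t₀ < u then X ω * Real.exp (-(r * (T - u))) + Y ω * D u ω else 0 := by
    intro u ω
    by_cases h : t₀ < u <;> simp [BDvalue, hψB, hψD, h]
  have hXnn : ∀ ω, 0 ≤ X ω := fun ω =>
    mul_nonneg (mul_nonneg (Set.indicator_nonneg (fun _ _ => zero_le_one) ω)
      (mul_self_nonneg _)) (Real.exp_pos _).le
  have hXpos : ∀ ω, τ ω ≤ t₀ → D t₀ ω ≠ 0 → 0 < X ω := by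
    intro ω hτ hD
    rw [hXdef]
    simp only [Set.indicator_of_mem (show ω ∈ A from hτ), one_mul]
    exact mul_pos ((mul_self_nonneg _).lt_of_ne
      (fun h => hD (mul_self_eq_zero.mp h.symm))) (Real.exp_pos _)
  have hVT : ∀ ω, BDvalue r T D ψB ψD T ω = X ω := by
    intro ω
    rw [hVal, if_pos ht₀T', hD_T]
    by_cases hτ : τ ω ≤ t₀
    · rw [Set.indicator_of_notMem
        (show ω ∉ {ω' | T < τ ω'} from not_lt.mpr (hτ.trans ht₀T'.le))]
      simp
    · have hY0 : Y ω = 0 := by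
        simp [hYdef, Set.indicator_of_notMem (show ω ∉ A from hτ)]
      simp [hY0]
  have hAm : MeasurableSet[enlarge F τ t₀] A := by
    have h1 : MeasurableSet[MeasurableSpace.generateFrom
        {B | ∃ u : ℝ, 0 ≤ u ∧ u ≤ t₀ ∧ B = {ω | τ ω ≤ u}}] A :=
      MeasurableSpace.measurableSet_generateFrom ⟨t₀, ht₀0, le_refl t₀, rfl⟩
    have h2 : MeasurableSpace.generateFrom
        {B | ∃ u : ℝ, 0 ≤ u ∧ u ≤ t₀ ∧ B = {ω | τ ω ≤ u}} ≤ enlarge F τ t₀ := le_sup_right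
    exact h2 _ h1
  have hD0m : Measurable[enlarge F τ t₀] (D t₀) := hD_adapted t₀ ⟨ht₀0, ht₀T⟩
  have hXm : Measurable[enlarge F τ t₀] X :=
    ((measurable_const.indicator hAm).mul (hD0m.mul hD0m)).mul_const _
  have hYm : Measurable[enlarge F τ t₀] Y :=
    ((measurable_const.indicator hAm).mul hD0m).neg
  have hadapted : ∀ t ∈ Set.Icc (0:ℝ) T,
      Measurable[enlarge F τ t] (ψB t) ∧ Measurable[enlarge F τ t] (ψD t) := by
    intro t ht
    by_cases h : t₀ < t
    · have hle : enlarge F τ t₀ ≤ enlarge F τ t :=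
        enlarge_mono' F τ (hF_mono t₀ t ht₀0 h.le ht.2) h.le
      constructor
      · simpa [hψB, h] using hXm.mono hle le_rfl
      · simpa [hψD, h] using hYm.mono hle le_rfl
    · constructor
      · simpa [hψB, h] using (measurable_const : Measurable[enlarge F τ t] fun _ : Ω => (0:ℝ))
      · simpa [hψD, h] using (measurable_const : Measurable[enlarge F τ t] fun _ : Ω => (0:ℝ))
  set s : ℕ → ℝ := fun n => if n = 0 then 0 else if n = 1 then t₀ else T with hs
  have hs0 : s 0 = 0 := rfl
  have hs1 : s 1 = t₀ := rfl
  have hs2 : s 2 = T := rfl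
  set xx : ℕ → Ω → ℝ := fun n => if n = 1 then (fun _ => (0:ℝ)) else X with hxx
  set yy : ℕ → Ω → ℝ := fun n => if n = 1 then (fun _ => (0:ℝ)) else Y with hyy
  refine hNBDSA ⟨ψB, ψD, ⟨hadapted, 2, s, xx, yy, two_pos, hs0, hs2, ?_, ?_, ?_, ?_⟩,
    ?_, ?_, ?_⟩
  · -- strict monotonicity
    intro n hn
    interval_cases n
    · rw [hs0, hs1]; exact ht₀0'
    · rw [hs1, hs2]; exact ht₀T'
  · -- measurability of x, y
    intro n h1 h2
    interval_cases n
    · constructor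
      · simpa [hxx] using (measurable_const : Measurable[enlarge F τ (s 0)] fun _ : Ω => (0:ℝ))
      · simpa [hyy] using (measurable_const : Measurable[enlarge F τ (s 0)] fun _ : Ω => (0:ℝ))
    · constructor
      · simpa [hxx, hs1] using hXm
      · simpa [hyy, hs1] using hYm
  · -- piecewise values
    intro n h1 h2
    interval_cases n
    · intro t ht
      rw [hs0, hs1] at ht
      constructor
      · funext ω; simp [hψB, hxx, not_lt.mpr ht.2]
      · funext ω; simp [hψD, hyy, not_lt.mpr ht.2]
    · intro t ht
      rw [hs1, hs2] at ht
      constructor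
      · funext ω; simp [hψB, hxx, ht.1]
      · funext ω; simp [hψD, hyy, ht.1]
  · -- self-financing
    intro n hn
    interval_cases n
    · rw [hs0]
      refine Filter.Eventually.of_forall fun ω => ?_
      have hv0 : BDvalue r T D ψB ψD 0 ω = 0 := by
        rw [hVal]; exact if_neg (not_lt.mpr ht₀0)
      rw [hv0]
      refine Filter.Tendsto.congr' ?_ tendsto_const_nhds
      filter_upwards [Ioo_mem_nhdsGT_of_mem (Set.mem_Ico.mpr ⟨le_refl (0:ℝ), ht₀0'⟩)]
        with u hu
      rw [hVal, if_neg (not_lt.mpr hu.2.le)]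
    · rw [hs1]
      refine Filter.Eventually.of_forall fun ω => ?_
      have hv : BDvalue r T D ψB ψD t₀ ω = 0 := by
        rw [hVal]; exact if_neg (lt_irrefl t₀)
      rw [hv]
      by_cases hτ : τ ω ≤ t₀
      · have hD1 : Filter.Tendsto (fun u => D u ω) (nhdsWithin t₀ (Set.Ioi t₀))
            (nhds (D t₀ ω)) :=
          (hD_rc ω t₀ ⟨ht₀0, ht₀T⟩ hτ).mono_left
            (nhdsWithin_mono _ Set.Ioi_subset_Ici_self)
        have hE : Filter.Tendsto (fun u => Real.exp (-(r * (T - u))))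
            (nhdsWithin t₀ (Set.Ioi t₀)) (nhds (Real.exp (-(r * (T - t₀))))) := by
          refine Filter.Tendsto.mono_left ?_ nhdsWithin_le_nhds
          exact (Real.continuous_exp.comp
            ((continuous_const.mul (continuous_const.sub continuous_id)).neg)).tendsto t₀
        have hlim : Filter.Tendsto
            (fun u => X ω * Real.exp (-(r * (T - u))) + Y ω * D u ω)
            (nhdsWithin t₀ (Set.Ioi t₀))
            (nhds (X ω * Real.exp (-(r * (T - t₀))) + Y ω * D t₀ ω)) :=
          (hE.const_mul _).add (hD1.const_mul _)
        have hzero : X ω * Real.exp (-(r * (T - t₀))) + Y ω * D t₀ ω = 0 := by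
          rw [hXdef, hYdef]
          simp only [Set.indicator_of_mem (show ω ∈ A from hτ), one_mul]
          rw [Real.exp_neg]
          field_simp
          ring
        refine Filter.Tendsto.congr' ?_ (hzero ▸ hlim)
        filter_upwards [self_mem_nhdsWithin] with u hu
        rw [hVal, if_pos (show t₀ < u from hu)]
      · have hX0 : X ω = 0 := by
          simp [hXdef, Set.indicator_of_notMem (show ω ∉ A from hτ)]
        have hY0 : Y ω = 0 := by
          simp [hYdef, Set.indicator_of_notMem (show ω ∉ A from hτ)]
        refine Filter.Tendsto.congr' ?_ tendsto_const_nhds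
        filter_upwards [self_mem_nhdsWithin] with u hu
        rw [hVal, if_pos (show t₀ < u from hu), hX0, hY0]
        ring
  · -- V(0) = 0 a.s.
    refine Filter.Eventually.of_forall fun ω => ?_
    rw [hVal]; exact if_neg (not_lt.mpr ht₀0)
  · -- V(T) ≥ 0 a.s.
    refine Filter.Eventually.of_forall fun ω => ?_
    rw [hVT]; exact hXnn ω
  · -- positive probability
    refine lt_of_lt_of_le (pos_iff_ne_zero.mpr hcon) (measure_mono ?_)
    intro ω h
    simp only [Set.mem_setOf_eq] at h ⊢
    rw [hVT]
    have hprod : D t₀ ω * A.indicator (fun _ => (1:ℝ)) ω ≠ 0 := h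
    have hind : A.indicator (fun _ => (1:ℝ)) ω ≠ 0 := right_ne_zero_of_mul hprod
    have hτ : τ ω ≤ t₀ := by
      by_contra hτ
      exact hind (Set.indicator_of_notMem (show ω ∉ A from hτ) _)
    exact hXpos ω hτ (left_ne_zero_of_mul hprod)
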